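/- Let (G, H) be a complex unit gain graph whose underlying simple graph G is acyclic (a forest). Then rank(H) = 2m(G), where m(G) is the matching number of G. -/

import Mathlib

/-- `(G, H)` is a complex unit gain graph: `H` is Hermitian, entries of adjacent pairs
have modulus `1`, and entries of non-adjacent pairs (including the diagonal) vanish. -/
def IsUnitGain {V : Type*} (G : SimpleGraph V) (H : Matrix V V ℂ) : Prop :=
  H.IsHermitian ∧ (∀ i j, G.Adj i j → ‖H i j‖ = 1) ∧
    ∀ i j, ¬ G.Adj i j → H i j = 0

/-- The matching number of a simple graph: the maximum size of a matching. -/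
noncomputable def matchNum {V : Type*} (G : SimpleGraph V) : ℕ :=
  sSup {n : ℕ | ∃ M : G.Subgraph, M.IsMatching ∧ M.edgeSet.ncard = n}

/-- The cyclomatic number `c(G) = |E(G)| - |V| + ω(G)` of a simple graph. -/
noncomputable def cycNum {V : Type*} (G : SimpleGraph V) : ℤ :=
  (G.edgeSet.ncard : ℤ) - (Nat.card V : ℤ) + (Nat.card G.ConnectedComponent : ℤ)

/-- The gain of a walk: the product of the matrix entries along its darts. -/
noncomputable def gain {V : Type*} {G : SimpleGraph V} (H : Matrix V V ℂ) {u v : V}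
    (w : G.Walk u v) : ℂ :=
  (w.darts.map fun d => H d.toProd.1 d.toProd.2).prod

/-- The set of vertices of `G` lying on some cycle. -/
def cycVerts {V : Type*} (G : SimpleGraph V) : Set V :=
  {u | ∃ (x : V) (w : G.Walk x x), w.IsCycle ∧ u ∈ w.support}

/-- `u` and `v` lie on a common cycle of `G`. -/
def cycleRel {V : Type*} (G : SimpleGraph V) (u v : V) : Prop :=
  ∃ (x : V) (w : G.Walk x x), w.IsCycle ∧ u ∈ w.support ∧ v ∈ w.support

/-- The setoid generated by "lying on a common cycle". -/
def contractSetoid {V : Type*} (G : SimpleGraph V) : Setoid V :=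
  Relation.EqvGen.setoid (cycleRel G)

/-- `T_G`: the graph obtained from `G` by contracting each cycle into a single vertex. -/
def TG {V : Type*} (G : SimpleGraph V) : SimpleGraph (Quotient (contractSetoid G)) where
  Adj a b := a ≠ b ∧ ∃ u v : V, Quotient.mk (contractSetoid G) u = a ∧
      Quotient.mk (contractSetoid G) v = b ∧ G.Adj u v
  symm := ⟨fun a b ⟨hne, u, v, hu, hv, hadj⟩ => ⟨hne.symm, v, u, hv, hu, hadj.symm⟩⟩
  loopless := ⟨fun a ⟨hne, _⟩ => hne rfl⟩

/-- The rank of the principal submatrix of `H` indexed by a set `s` of vertices. -/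
noncomputable def rankOn {V : Type*} [Fintype V] (H : Matrix V V ℂ) (s : Set V) : ℕ :=
  letI : Fintype s := (Set.toFinite s).fintype
  (H.submatrix (Subtype.val : s → V) (Subtype.val : s → V)).rank

/-- The cycles of `G` are pairwise vertex-disjoint: any two cycles sharing a
vertex have the same edges. -/
def cyclesDisjoint {V : Type*} (G : SimpleGraph V) : Prop :=
  ∀ ⦃x y : V⦄ (c₁ : G.Walk x x) (c₂ : G.Walk y y), c₁.IsCycle → c₂.IsCycle →
    (∃ u, u ∈ c₁.support ∧ u ∈ c₂.support) → ∀ e, e ∈ c₁.edges ↔ e ∈ c₂.edges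

/-- `b(G)`: the minimum cardinality of a set `S` of vertices such that `G - S` is
bipartite (i.e. `2`-colorable). -/
noncomputable def bipNum {V : Type*} (G : SimpleGraph V) : ℕ :=
  sInf {n : ℕ | ∃ S : Set V, S.ncard = n ∧ (G.induce Sᶜ).Colorable 2}

section AuxProof
universe u


lemma aux_range_prodMap {R M N P Q : Type*} [CommRing R] [AddCommGroup M] [AddCommGroup N]
    [AddCommGroup P] [AddCommGroup Q] [Module R M] [Module R N] [Module R P] [Module R Q]
    (f : M →ₗ[R] P) (g : N →ₗ[R] Q) :
    LinearMap.range (f.prodMap g) = (LinearMap.range f).prod (LinearMap.range g) := by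
  ext ⟨p, q⟩
  constructor
  · rintro ⟨⟨m, n⟩, h⟩
    rw [LinearMap.prodMap_apply, Prod.ext_iff] at h
    exact ⟨⟨m, h.1⟩, ⟨n, h.2⟩⟩
  · rintro ⟨⟨m, rfl⟩, ⟨n, rfl⟩⟩; exact ⟨(m, n), rfl⟩

def auxSubProdEquiv {R M N : Type*} [CommRing R] [AddCommGroup M] [AddCommGroup N]
    [Module R M] [Module R N] (p : Submodule R M) (q : Submodule R N) :
    (p.prod q) ≃ₗ[R] p × q where
  toFun x := (⟨x.1.1, x.2.1⟩, ⟨x.1.2, x.2.2⟩)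
  map_add' _ _ := rfl
  map_smul' _ _ := rfl
  invFun x := ⟨(x.1.1, x.2.1), ⟨x.1.2, x.2.2⟩⟩
  left_inv _ := rfl
  right_inv _ := rfl

lemma aux_rank_fromBlocks_diag {m n : Type*} [Fintype m] [Fintype n] [DecidableEq m]
    [DecidableEq n] (A : Matrix m m ℂ) (D : Matrix n n ℂ) :
    (Matrix.fromBlocks A 0 0 D).rank = A.rank + D.rank := by
  classical
  set e := LinearEquiv.sumArrowLequivProdArrow m n ℂ ℂ with he
  have hM : (Matrix.fromBlocks A 0 0 D).mulVecLin
      = (e.symm.toLinearMap ∘ₗ (A.mulVecLin.prodMap D.mulVecLin)) ∘ₗ e.toLinearMap := by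
    apply LinearMap.ext; intro v
    funext i
    cases i <;>
      simp [he, Matrix.fromBlocks_mulVec, LinearEquiv.sumArrowLequivProdArrow,
        Equiv.sumArrowEquivProdArrow]
  rw [Matrix.rank, hM, LinearMap.range_comp, LinearEquiv.range, Submodule.map_top,
    LinearMap.range_comp, LinearEquiv.finrank_map_eq, aux_range_prodMap,
    (auxSubProdEquiv _ _).finrank_eq, Module.finrank_prod, Matrix.rank, Matrix.rank]




lemma exists_leaf [Fintype V] {G : SimpleGraph V} (hac : G.IsAcyclic)
    {a b : V} (hab : G.Adj a b) :
    ∃ x u : V, G.Adj x u ∧ ∀ w, G.Adj x w → w = u := by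
  classical
  set S : Set ℕ := {n : ℕ | ∃ (x y : V) (p : G.Walk x y), p.IsPath ∧ p.length = n} with hS
  have h1 : 1 ∈ S := by
    refine ⟨a, b, SimpleGraph.Walk.cons hab SimpleGraph.Walk.nil, ?_, rfl⟩
    simp [hab.ne]
  have hbdd : BddAbove S := by
    refine ⟨Fintype.card V, ?_⟩
    rintro n ⟨x, y, p, hp, rfl⟩
    exact hp.length_lt.le
  obtain ⟨x, y, p, hp, hlen⟩ := Nat.sSup_mem ⟨1, h1⟩ hbdd
  have h1le : 1 ≤ sSup S := le_csSup hbdd h1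
  cases p with
  | nil => simp at hlen; omega
  | @cons _ u _ hxu p' =>
    refine ⟨x, u, hxu, fun w hw => ?_⟩
    have hwx : w ≠ x := (G.ne_of_adj hw.symm)
    by_cases hmem : w ∈ (SimpleGraph.Walk.cons hxu p').support
    · have hqp : ((SimpleGraph.Walk.cons hxu p').takeUntil w hmem).IsPath :=
        SimpleGraph.Walk.IsPath.takeUntil hp hmem
      have hcyc := hac (SimpleGraph.Walk.cons hw.symm
        ((SimpleGraph.Walk.cons hxu p').takeUntil w hmem))
      have hedge : s(w, x) ∈ ((SimpleGraph.Walk.cons hxu p').takeUntil w hmem).edges := by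
        by_contra hne
        exact hcyc ((SimpleGraph.Walk.cons_isCycle_iff _ _).mpr ⟨hqp, hne⟩)
      have hspec := (SimpleGraph.Walk.cons hxu p').take_spec hmem
      cases hq2 : ((SimpleGraph.Walk.cons hxu p').takeUntil w hmem) with
      | nil => rw [hq2] at hedge; simp at hedge
      | @cons _ u' _ hxu' r =>
        rw [hq2] at hedge hqp hspec
        rw [SimpleGraph.Walk.edges_cons] at hedge
        rw [SimpleGraph.Walk.cons_isPath_iff] at hqp
        rcases List.mem_cons.mp hedge with h | h
        · have hwu' : w = u' := by
            rcases Sym2.eq_iff.mp h with ⟨h1, h2⟩ | ⟨h1, h2⟩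
            · exact absurd h1 hwx
            · exact h1
          subst hwu'
          have hsup := congrArg SimpleGraph.Walk.support hspec
          rw [SimpleGraph.Walk.support_append, SimpleGraph.Walk.support_cons,
            SimpleGraph.Walk.support_cons, r.support_eq_cons, p'.support_eq_cons] at hsup
          simp only [List.cons_append, List.cons.injEq] at hsup
          exact hsup.2.1
        · exact absurd (SimpleGraph.Walk.snd_mem_support_of_mem_edges r h) hqp.2
    · have hlong : (SimpleGraph.Walk.cons hw.symm (SimpleGraph.Walk.cons hxu p')).IsPath :=
        hp.cons hmem
      have hmem2 : (SimpleGraph.Walk.cons hxu p').length + 1 ∈ S := ⟨w, y, _, hlong, by simp⟩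
      have := le_csSup hbdd hmem2
      omega




lemma matchSet_nonempty (G : SimpleGraph V) :
    {n : ℕ | ∃ M : G.Subgraph, M.IsMatching ∧ M.edgeSet.ncard = n}.Nonempty :=
  ⟨0, ⊥, fun v hv => absurd hv (by simp), by simp⟩

lemma matchSet_bdd [Fintype V] (G : SimpleGraph V) :
    BddAbove {n : ℕ | ∃ M : G.Subgraph, M.IsMatching ∧ M.edgeSet.ncard = n} := by
  refine ⟨(Set.univ : Set (Sym2 V)).ncard, ?_⟩
  rintro n ⟨M, -, rfl⟩
  exact Set.ncard_le_ncard (Set.subset_univ _) (Set.toFinite _)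

lemma matchNum_spec [Fintype V] (G : SimpleGraph V) :
    ∃ M : G.Subgraph, M.IsMatching ∧ M.edgeSet.ncard = matchNum G :=
  Nat.sSup_mem (matchSet_nonempty G) (matchSet_bdd G)

lemma le_matchNum [Fintype V] {G : SimpleGraph V} {M : G.Subgraph} (hM : M.IsMatching) :
    M.edgeSet.ncard ≤ matchNum G :=
  le_csSup (matchSet_bdd G) ⟨M, hM, rfl⟩

lemma subgraph_edgeSet_map {W : Type*} {G : SimpleGraph V} {G' : SimpleGraph W} (f : G →g G')
    (M : G.Subgraph) : (M.map f).edgeSet = Sym2.map f '' M.edgeSet := by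
  ext e
  refine Sym2.ind (fun a b => ?_) e
  constructor
  · rintro (h : (M.map f).Adj a b)
    obtain ⟨p, q, hadj, h1, h2⟩ := h
    exact ⟨s(p, q), hadj, by rw [Sym2.map_pair_eq, h1, h2]⟩
  · rintro ⟨e', he', hmap⟩
    revert he' hmap
    refine Sym2.ind (fun p q he' hmap => ?_) e'
    rw [Sym2.map_pair_eq, Sym2.eq_iff] at hmap
    rcases hmap with ⟨h1, h2⟩ | ⟨h1, h2⟩
    · exact ⟨p, q, SimpleGraph.Subgraph.mem_edgeSet.mp he', h1, h2⟩
    · exact ⟨q, p, (SimpleGraph.Subgraph.mem_edgeSet.mp he').symm, h2, h1⟩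

/-- Lift a subgraph of `G` with vertices inside `s` to a subgraph of `G.induce s`. -/
def liftSub {G : SimpleGraph V} (s : Set V) (M : G.Subgraph) (hsub : M.verts ⊆ s) :
    (G.induce s).Subgraph where
  verts := Subtype.val ⁻¹' M.verts
  Adj a b := M.Adj a b
  adj_sub := fun h => M.adj_sub h
  edge_vert := fun h => M.edge_vert h
  symm := ⟨fun _ _ h => M.adj_symm h⟩

lemma liftSub_isMatching {G : SimpleGraph V} {s : Set V} {M : G.Subgraph} (hsub : M.verts ⊆ s)
    (hM : M.IsMatching) : (liftSub s M hsub).IsMatching := by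
  rintro ⟨a, ha⟩ hmem
  obtain ⟨w, hw, huniq⟩ := hM hmem
  refine ⟨⟨w, hsub (M.edge_vert hw.symm)⟩, hw, ?_⟩
  rintro ⟨y, hy⟩ h
  exact Subtype.ext (huniq y h)

lemma liftSub_edgeSet {G : SimpleGraph V} {s : Set V} {M : G.Subgraph} (hsub : M.verts ⊆ s) :
    M.edgeSet = Sym2.map Subtype.val '' (liftSub s M hsub).edgeSet := by
  ext e
  refine Sym2.ind (fun a b => ?_) e
  constructor
  · intro h
    rw [SimpleGraph.Subgraph.mem_edgeSet] at h
    refine ⟨s(⟨a, hsub (M.edge_vert h)⟩, ⟨b, hsub (M.edge_vert h.symm)⟩), h, by simp⟩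
  · rintro ⟨e', he', hmap⟩
    revert he' hmap
    refine Sym2.ind (fun p q he' hmap => ?_) e'
    rw [Sym2.map_pair_eq, Sym2.eq_iff] at hmap
    have hadj : M.Adj ↑p ↑q := he'
    rcases hmap with ⟨h1, h2⟩ | ⟨h1, h2⟩
    · rw [← h1, ← h2]; exact hadj
    · rw [← h1, ← h2]; exact hadj.symm

lemma matchNum_step [Fintype V] {G : SimpleGraph V} {x u : V}
    (hxu : G.Adj x u) (hleaf : ∀ w, G.Adj x w → w = u)
    (s : Set V) [Fintype s] (hs : ∀ w, w ∈ s ↔ w ≠ x ∧ w ≠ u) :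
    matchNum G = matchNum (G.induce s) + 1 := by
  classical
  apply le_antisymm
  · -- matchNum G ≤ matchNum (G.induce s) + 1
    obtain ⟨M, hM, hcard⟩ := matchNum_spec G
    set S0 : Set V := {z | z = x ∨ z = u ∨ M.Adj u z} with hS0
    have hxS0 : x ∈ S0 := Or.inl rfl
    have huS0 : u ∈ S0 := Or.inr (Or.inl rfl)
    set M' := M.deleteVerts S0 with hM'
    -- M' is a matching
    have hM'match : M'.IsMatching := by
      intro v hv
      rw [hM', SimpleGraph.Subgraph.deleteVerts_verts, Set.mem_diff] at hv
      obtain ⟨hv1, hv2⟩ := hv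
      obtain ⟨w, hw, huniq⟩ := hM hv1
      have hwx : w ≠ x := by
        rintro rfl
        have := hleaf v (M.adj_sub hw.symm)
        exact hv2 (this ▸ huS0)
      have hwu : w ≠ u := by
        rintro rfl
        exact hv2 (Or.inr (Or.inr hw.symm))
      have hwS0 : w ∉ S0 := by
        rintro (rfl | rfl | hadj)
        · exact hwx rfl
        · exact hwu rfl
        · -- M.Adj u w and M.Adj v w → u = v, but then v ∈ S0
          obtain ⟨z, hz, hzuniq⟩ := hM (M.edge_vert hw.symm)
          have h1 := hzuniq u hadj.symm
          have h2 := hzuniq v hw.symm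
          rw [← h2] at h1
          exact hv2 (h1 ▸ huS0)
      refine ⟨w, ?_, ?_⟩
      · rw [hM']
        exact (SimpleGraph.Subgraph.deleteVerts_adj).mpr
          ⟨hv1, hv2, M.edge_vert hw.symm, hwS0, hw⟩
      · intro y hy
        rw [hM', SimpleGraph.Subgraph.deleteVerts_adj] at hy
        exact huniq y hy.2.2.2.2
    have hvsub : M'.verts ⊆ s := by
      intro z hz
      rw [hM', SimpleGraph.Subgraph.deleteVerts_verts, Set.mem_diff] at hz
      exact (hs z).mpr ⟨fun h => hz.2 (h ▸ hxS0), fun h => hz.2 (h ▸ huS0)⟩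
    -- edge counting
    have hcount : M.edgeSet.ncard ≤ M'.edgeSet.ncard + 1 := by
      by_cases hu : u ∈ M.verts
      · obtain ⟨p, hp, -⟩ := hM hu
        have hss : M.edgeSet ⊆ insert s(u, p) M'.edgeSet := by
          intro e he
          revert he
          refine Sym2.ind (fun a b he => ?_) e
          rw [SimpleGraph.Subgraph.mem_edgeSet] at he
          by_cases haS : a ∈ S0
          · -- the edge must be s(u,p)
            left
            rcases haS with rfl | rfl | hadj
            · -- a = x : x's partner is u, so b = u, and then p = x
              have hbu : b = u := hleaf b (M.adj_sub he)
              subst hbu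
              obtain ⟨z, hz, hzuniq⟩ := hM hu
              have h1 := hzuniq a he.symm
              have h2 := hzuniq p hp
              rw [Sym2.eq_swap]
              rw [h1, ← h2]
            · -- a = u
              obtain ⟨z, hz, hzuniq⟩ := hM hu
              have h1 := hzuniq b he
              have h2 := hzuniq p hp
              rw [h1, ← h2]
            · -- M.Adj u a : then u is a's partner, b is a's partner → b = u
              obtain ⟨z, hz, hzuniq⟩ := hM (M.edge_vert hadj.symm)
              have h1 := hzuniq u hadj.symm
              have h2 := hzuniq b he
              rw [← h2] at h1
              subst h1
              obtain ⟨z', hz', hzuniq'⟩ := hM hu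
              have h3 := hzuniq' a he.symm
              have h4 := hzuniq' p hp
              rw [Sym2.eq_swap, h3, ← h4]
          · by_cases hbS : b ∈ S0
            · left
              rcases hbS with rfl | rfl | hadj
              · have hau : a = u := hleaf a (M.adj_sub he.symm)
                subst hau
                obtain ⟨z, hz, hzuniq⟩ := hM hu
                have h1 := hzuniq b he
                have h2 := hzuniq p hp
                rw [h1, ← h2]
              · obtain ⟨z, hz, hzuniq⟩ := hM hu
                have h1 := hzuniq a he.symm
                have h2 := hzuniq p hp
                rw [Sym2.eq_swap, h1, ← h2]
              · obtain ⟨z, hz, hzuniq⟩ := hM (M.edge_vert hadj.symm)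
                have h1 := hzuniq u hadj.symm
                have h2 := hzuniq a he.symm
                rw [← h2] at h1
                subst h1
                obtain ⟨z', hz', hzuniq'⟩ := hM hu
                have h3 := hzuniq' b he
                have h4 := hzuniq' p hp
                rw [h3, ← h4]
            · right
              rw [SimpleGraph.Subgraph.mem_edgeSet, hM',
                SimpleGraph.Subgraph.deleteVerts_adj]
              exact ⟨M.edge_vert he, haS, M.edge_vert he.symm, hbS, he⟩
        calc M.edgeSet.ncard ≤ (insert s(u, p) M'.edgeSet).ncard :=
              Set.ncard_le_ncard hss (Set.toFinite _)
          _ ≤ M'.edgeSet.ncard + 1 := Set.ncard_insert_le _ _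
      · -- u unmatched : no edge of M meets S0
        have hss : M.edgeSet ⊆ M'.edgeSet := by
          intro e he
          revert he
          refine Sym2.ind (fun a b he => ?_) e
          rw [SimpleGraph.Subgraph.mem_edgeSet] at he
          have hax : ∀ c d : V, M.Adj c d → c ∉ S0 := by
            intro c d hcd
            rintro (rfl | rfl | hadj)
            · exact hu ((hleaf d (M.adj_sub hcd)) ▸ M.edge_vert hcd.symm)
            · exact hu (M.edge_vert hcd)
            · exact hu (M.edge_vert hadj)
          rw [SimpleGraph.Subgraph.mem_edgeSet, hM', SimpleGraph.Subgraph.deleteVerts_adj]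
          exact ⟨M.edge_vert he, hax a b he, M.edge_vert he.symm, hax b a he.symm, he⟩
        have := Set.ncard_le_ncard hss (Set.toFinite _)
        omega
    -- lift M' to the induced graph
    have hle := le_matchNum (liftSub_isMatching hvsub hM'match)
    have hcardeq : M'.edgeSet.ncard = (liftSub s M' hvsub).edgeSet.ncard := by
      rw [liftSub_edgeSet hvsub,
        Set.ncard_image_of_injective _ (Sym2.map.injective Subtype.val_injective)]
    omega
  · -- matchNum (G.induce s) + 1 ≤ matchNum G
    obtain ⟨M', hM', hcard⟩ := matchNum_spec (G.induce s)
    set f : G.induce s →g G := (SimpleGraph.Embedding.induce s).toHom with hf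
    have hfinj : Function.Injective f := Subtype.val_injective
    set N1 := M'.map f with hN1
    have hN1match : N1.IsMatching := hM'.map f hfinj
    set N2 := G.subgraphOfAdj hxu with hN2
    have hN2match : N2.IsMatching := SimpleGraph.Subgraph.IsMatching.subgraphOfAdj hxu
    have hN1verts : N1.verts ⊆ s := by
      rintro z ⟨w, hw, rfl⟩
      exact w.2
    have hdisj : Disjoint N1.support N2.support := by
      rw [hN1match.support_eq_verts, hN2, SimpleGraph.support_subgraphOfAdj]
      rw [Set.disjoint_left]
      intro z hz
      have := (hs z).mp (hN1verts hz)
      rintro (rfl | rfl)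
      · exact this.1 rfl
      · exact this.2 rfl
    have hsupmatch : (N1 ⊔ N2).IsMatching := hN1match.sup hN2match hdisj
    have hedges : (N1 ⊔ N2).edgeSet.ncard = N1.edgeSet.ncard + 1 := by
      rw [SimpleGraph.Subgraph.edgeSet_sup]
      have hxuN1 : s(x, u) ∉ N1.edgeSet := by
        intro h
        have hx : x ∈ N1.verts := N1.edge_vert h
        exact ((hs x).mp (hN1verts hx)).1 rfl
      rw [Set.ncard_union_eq ?_ (Set.toFinite _) (Set.toFinite _)]
      · rw [hN2, SimpleGraph.edgeSet_subgraphOfAdj, Set.ncard_singleton]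
      · rw [hN2, SimpleGraph.edgeSet_subgraphOfAdj]
        rw [Set.disjoint_right]
        rintro e rfl
        exact hxuN1
    have hN1card : N1.edgeSet.ncard = M'.edgeSet.ncard := by
      rw [hN1, subgraph_edgeSet_map, Set.ncard_image_of_injective _ (Sym2.map.injective hfinj)]
    have := le_matchNum hsupmatch
    omega

lemma rank_step [Fintype V] [DecidableEq V] {G : SimpleGraph V} {H : Matrix V V ℂ}
    (hH : IsUnitGain G H) {x u : V} (hxu : G.Adj x u) (hleaf : ∀ w, G.Adj x w → w = u)
    (s : Set V) [Fintype s] (hs : ∀ w, w ∈ s ↔ w ≠ x ∧ w ≠ u) :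
    H.rank = 2 + (H.submatrix (Subtype.val : s → V) (Subtype.val : s → V)).rank := by
  obtain ⟨hHerm, hGain, hZero⟩ := hH
  have hxune : x ≠ u := G.ne_of_adj hxu
  set a : ℂ := H x u with ha
  have haa : ‖a‖ = 1 := hGain _ _ hxu
  have ha0 : a ≠ 0 := by
    intro h; rw [h] at haa; simp at haa
  have hstar : ∀ i j : V, H i j = star (H j i) := fun i j => (hHerm.apply i j).symm
  have hsa0 : star a ≠ 0 := star_ne_zero.mpr ha0
  have hrowx : ∀ w, w ≠ u → H x w = 0 := by
    intro w hwu
    by_cases h : G.Adj x w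
    · exact absurd (hleaf w h) hwu
    · exact hZero _ _ h
  have hcolx : ∀ w, w ≠ u → H w x = 0 := by
    intro w hwu
    rw [hstar w x, hrowx w hwu, star_zero]
  have hxx : H x x = 0 := hrowx x hxune.symm.symm |>.symm ▸ hrowx x (fun h => hxune (h ▸ rfl))
  have huu : H u u = 0 := hZero _ _ (G.loopless.irrefl u)
  have hux : H u x = star a := by rw [hstar u x, ha]
  -- the row/column operation matrices
  set c : V → ℂ := fun w => if w = x then 0 else H w u / a with hc
  set d : V → ℂ := fun w => if w = x then 0 else H u w / star a with hd
  set N : Matrix V V ℂ := Matrix.of fun i j => c i * (if j = x then 1 else 0) with hN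
  set M : Matrix V V ℂ := Matrix.of fun i j => (if i = x then 1 else 0) * d j with hM
  have hNN : N * N = 0 := by
    ext i j
    simp only [Matrix.mul_apply, hN, Matrix.of_apply, Matrix.zero_apply]
    refine Finset.sum_eq_zero fun k _ => ?_
    by_cases hk : k = x
    · subst hk; simp [hc]
    · simp [hk]
  have hMM : M * M = 0 := by
    ext i j
    simp only [Matrix.mul_apply, hM, Matrix.of_apply, Matrix.zero_apply]
    refine Finset.sum_eq_zero fun k _ => ?_
    by_cases hk : k = x
    · subst hk; simp [hd]
    · simp [hk]
  have hPinv : (1 - N) * (1 + N) = 1 := by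
    have h : (1 - N) * (1 + N) = 1 - N * N := by noncomm_ring
    rw [h, hNN, sub_zero]
  have hQinv : (1 + M) * (1 - M) = 1 := by
    have h : (1 + M) * (1 - M) = 1 - M * M := by noncomm_ring
    rw [h, hMM, sub_zero]
  have hPdet : IsUnit (1 - N).det := Matrix.isUnit_det_of_right_inverse hPinv
  have hQdet : IsUnit (1 - M).det := Matrix.isUnit_det_of_left_inverse hQinv
  set B : Matrix V V ℂ := (1 - N) * H * (1 - M) with hB
  have hrankB : B.rank = H.rank := by
    rw [hB, Matrix.rank_mul_eq_left_of_isUnit_det _ _ hQdet,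
      Matrix.rank_mul_eq_right_of_isUnit_det _ _ hPdet]
  -- entries of B
  have hNH : ∀ i j, (N * H) i j = c i * H x j := by
    intro i j
    simp only [Matrix.mul_apply, hN, Matrix.of_apply]
    rw [Finset.sum_eq_single x]
    · simp
    · intro k _ hk; simp [hk]
    · intro h; exact absurd (Finset.mem_univ x) h
  have hHM : ∀ i j, (H * M) i j = H i x * d j := by
    intro i j
    simp only [Matrix.mul_apply, hM, Matrix.of_apply]
    rw [Finset.sum_eq_single x]
    · simp
    · intro k _ hk; simp [hk]
    · intro h; exact absurd (Finset.mem_univ x) h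
  have hBentry : ∀ i j, B i j = H i j - c i * H x j - H i x * d j + c i * H x x * d j := by
    intro i j
    have : B = H - N * H - H * M + N * (H * M) := by
      rw [hB]; noncomm_ring
    rw [this]
    simp only [Matrix.add_apply, Matrix.sub_apply, hNH, hHM]
    have hNHM : (N * (H * M)) i j = c i * (H * M) x j := by
      simp only [Matrix.mul_apply, hN, Matrix.of_apply]
      rw [Finset.sum_eq_single x]
      · simp
      · intro k _ hk; simp [hk]
      · intro h; exact absurd (Finset.mem_univ x) h
    rw [hNHM, hHM]; ring
  -- entry values of B
  have hBxu : B x u = a := by rw [hBentry]; simp [hc, hxx, ha]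
  have hBux : B u x = star a := by
    rw [hBentry]
    simp [hc, hd, huu, hux, hxune.symm]
  have hBrow_x : ∀ j, j ≠ u → B x j = 0 := by
    intro j hj
    rw [hBentry, hrowx j hj]
    simp [hc, hxx]
  have hBcol_x : ∀ i, i ≠ u → B i x = 0 := by
    intro i hi
    rw [hBentry, hcolx i hi]
    simp [hd, hxx]
  have hBrow_u : ∀ j, j ≠ x → B u j = 0 := by
    intro j hj
    have hcu : c u = 0 := by simp [hc, huu, hxune.symm]
    rw [hBentry, hcu, hux]
    have hdj : d j = H u j / star a := by simp [hd, hj]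
    rw [hdj, mul_div_cancel₀ _ hsa0]
    ring
  have hBcol_u : ∀ i, i ≠ x → B i u = 0 := by
    intro i hi
    have hdu : d u = 0 := by simp [hd, huu, hxune.symm]
    rw [hBentry, hdu]
    have hci : c i = H i u / a := by simp [hc, hi]
    rw [hci, ← ha, div_mul_cancel₀ _ ha0]
    ring
  have hBss : ∀ i j, i ≠ x → i ≠ u → j ≠ u → B i j = H i j := by
    intro i j hix hiu hju
    rw [hBentry, hrowx j hju, hcolx i hiu, hxx]
    ring
  have hxs : x ∉ s := fun h => ((hs x).mp h).1 rfl
  have hus : u ∉ s := fun h => ((hs u).mp h).2 rfl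
  set e : (Fin 2 ⊕ s) ≃ V :=
    { toFun := Sum.elim ![x, u] Subtype.val
      invFun := fun v => if hvx : v = x then Sum.inl 0 else if hvu : v = u then Sum.inl 1
        else Sum.inr ⟨v, (hs v).mpr ⟨hvx, hvu⟩⟩
      left_inv := by
        rintro (i | ⟨w, hw⟩)
        · fin_cases i
          · simp
          · simp [Ne.symm hxune]
        · obtain ⟨h1, h2⟩ := (hs w).mp hw
          simp [h1, h2]
      right_inv := by
        intro v
        by_cases hvx : v = x
        · simp [hvx]
        · by_cases hvu : v = u
          · simp [hvx, hvu, Ne.symm hxune]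
          · simp [hvx, hvu] } with he
  have hBsub : B.submatrix e e
      = Matrix.fromBlocks !![0, a; star a, 0] 0 0
        (H.submatrix (Subtype.val : s → V) (Subtype.val : s → V)) := by
    ext i j
    rcases i with i | ⟨w, hw⟩ <;> rcases j with j | ⟨z, hz⟩
    · fin_cases i <;> fin_cases j
      · simpa [he] using hBrow_x x hxune
      · simpa [he] using hBxu
      · simpa [he] using hBux
      · simpa [he] using hBrow_u u (Ne.symm hxune)
    · fin_cases i
      · simpa [he] using hBrow_x z ((hs z).mp hz).2
      · simpa [he] using hBrow_u z ((hs z).mp hz).1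
    · fin_cases j
      · simpa [he] using hBcol_x w ((hs w).mp hw).2
      · simpa [he] using hBcol_u w ((hs w).mp hw).1
    · simpa [he] using
        hBss w z ((hs w).mp hw).1 ((hs w).mp hw).2 ((hs z).mp hz).2
  have h2 : (!![0, a; star a, 0] : Matrix (Fin 2) (Fin 2) ℂ).rank = 2 := by
    have h1 : a * star a = 1 := by
      have h := Complex.mul_conj a
      rw [Complex.normSq_eq_norm_sq, haa] at h
      simpa [Complex.star_def] using h
    have hdet : (!![0, a; star a, 0] : Matrix (Fin 2) (Fin 2) ℂ).det = -1 := by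
      rw [Matrix.det_fin_two_of]
      linear_combination -h1
    rw [Matrix.rank_of_isUnit]
    · simp
    · rw [Matrix.isUnit_iff_isUnit_det, hdet]
      exact isUnit_one.neg
  rw [← hrankB, ← Matrix.rank_submatrix B e e, hBsub, aux_rank_fromBlocks_diag, h2]


lemma main_aux : ∀ (n : ℕ) (V : Type u) [Fintype V] [DecidableEq V] (G : SimpleGraph V)
    (H : Matrix V V ℂ), Fintype.card V ≤ n → IsUnitGain G H → G.IsAcyclic →
    H.rank = 2 * matchNum G := by
  intro n
  induction n with
  | zero =>
    intro V _ _ G H hcard hH hac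
    have : IsEmpty V := Fintype.card_eq_zero_iff.mp (Nat.le_zero.mp hcard)
    have hH0 : H = 0 := by
      ext i j
      exact (this.false i).elim
    have hm : matchNum G = 0 := by
      apply Nat.le_antisymm _ (Nat.zero_le _)
      apply csSup_le (matchSet_nonempty G)
      rintro m ⟨M, -, rfl⟩
      have : M.edgeSet = ∅ := by
        ext e
        refine Sym2.ind (fun a b => ?_) e
        exact iff_of_false (fun h => this.false a) (fun h => h.elim)
      simp [this]
    rw [hH0, hm, Matrix.rank_zero]
  | succ n ih =>
    intro V _ _ G H hcard hH hac
    by_cases hE : ∃ a b : V, G.Adj a b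
    · obtain ⟨a0, b0, hab⟩ := hE
      obtain ⟨x, u, hxu, hleaf⟩ := exists_leaf hac hab
      set s : Set V := {w | w ≠ x ∧ w ≠ u} with hsdef
      have hs : ∀ w, w ∈ s ↔ w ≠ x ∧ w ≠ u := fun w => Iff.rfl
      letI : Fintype s := (Set.toFinite s).fintype
      have hxnots : x ∉ s := fun h => ((hs x).mp h).1 rfl
      have hcards : Fintype.card s < Fintype.card V := by
        have hxr : x ∉ Set.range (Subtype.val : s → V) := by
          rintro ⟨⟨w, hw⟩, hval⟩
          exact ((hs w).mp hw).1 hval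
        exact Fintype.card_lt_of_injective_of_notMem _ Subtype.val_injective hxr
      set G' := G.induce s with hG'
      set H' := H.submatrix (Subtype.val : s → V) (Subtype.val : s → V) with hH'
      have hf : Function.Injective ((SimpleGraph.Embedding.induce s).toHom : G' →g G) :=
        Subtype.val_injective
      have hgain' : IsUnitGain G' H' := by
        obtain ⟨hHerm, hGain, hZero⟩ := hH
        exact ⟨hHerm.submatrix _, fun i j hadj => hGain _ _ hadj,
          fun i j hnadj => hZero _ _ hnadj⟩
      have hac' : G'.IsAcyclic := by
        intro v c hc
        exact hac _ ((SimpleGraph.Walk.map_isCycle_iff_of_injective hf).mpr hc)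
      have hrec := ih s G' H' (by omega) hgain' hac'
      have h1 := rank_step hH hxu hleaf s hs
      have h2 := matchNum_step hxu hleaf s hs
      rw [h1, hrec, h2]
      ring
    · push_neg at hE
      have hH0 : H = 0 := by
        ext i j
        exact hH.2.2 i j (hE i j)
      have hm : matchNum G = 0 := by
        apply Nat.le_antisymm _ (Nat.zero_le _)
        apply csSup_le (matchSet_nonempty G)
        rintro m ⟨M, -, rfl⟩
        have hME : M.edgeSet = ∅ := by
          ext e
          refine Sym2.ind (fun a b => ?_) e
          exact iff_of_false (fun h => hE a b (M.adj_sub h)) (fun h => h.elim)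
        simp [hME]
      rw [hH0, hm, Matrix.rank_zero]

end AuxProof

/-- **Lemma.** If the underlying graph of a complex unit gain graph `(G, H)` is
acyclic (a forest), then `rank(H) = 2m(G)`. -/
theorem rank_eq_twice_matchNum_of_acyclic {V : Type*} [Fintype V]
    (G : SimpleGraph V) (H : Matrix V V ℂ)
    (hH : IsUnitGain G H) (hac : G.IsAcyclic) :
    H.rank = 2 * matchNum G := by
  classical
  exact main_aux (Fintype.card V) V G H le_rfl hH hac
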